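/- The smoothed hinge loss g_σ(h_k, y_k, ·): ℝⁿ → ℝ has gradient that is Lipschitz continuous with constant ‖h_k h_kᵀ‖₂/(σ‖h_k‖_∞), where ‖·‖₂ denotes the spectral norm; consequently the sum over N' samples has a gradient that is Lipschitz with constant (N'/σ)·max_k ‖h_k h_kᵀ‖₂/‖h_k‖_∞. -/

import Mathlib

open Asymptotics Filter

private lemma q_deriv' (t : ℝ) : HasDerivAt (fun s : ℝ => (min s 0)^2) (2 * min t 0) t := by
  rcases lt_trichotomy t 0 with ht | ht | ht
  · have heq : (fun s : ℝ => (min s 0)^2) =ᶠ[nhds t] fun s => s^2 := by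
      filter_upwards [Iio_mem_nhds ht] with s hs
      rw [min_eq_left (le_of_lt (Set.mem_Iio.mp hs))]
    have := (hasDerivAt_pow 2 t).congr_of_eventuallyEq heq
    rw [min_eq_left ht.le]
    refine this.congr_deriv ?_
    norm_num
  · subst ht
    rw [hasDerivAt_iff_isLittleO]
    simp only [min_self, sub_zero, smul_zero, ne_eq]
    have h1 : (fun s : ℝ => (min s 0)^2) =O[nhds 0] fun s => s * s := by
      apply IsBigO.of_bound 1
      filter_upwards with s
      simp only [one_mul, Real.norm_eq_abs, abs_mul]
      calc |min s 0 ^ 2| = |min s 0| * |min s 0| := by rw [sq, abs_mul]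
        _ ≤ |s| * |s| := by
            apply mul_le_mul _ _ (abs_nonneg _) (abs_nonneg _) <;>
            · rcases le_total s 0 with hs | hs <;> simp [min_eq_left, min_eq_right, hs, abs_nonneg]
    have h2 : (fun s : ℝ => s * s) =o[nhds 0] fun s : ℝ => s := by
      have := (isLittleO_one_iff (f := fun s : ℝ => s) (l := nhds (0:ℝ)) ℝ).2
        (tendsto_id (x := nhds (0:ℝ)))
      simpa using this.mul_isBigO (isBigO_refl (fun s : ℝ => s) (nhds 0))
    have := h1.trans_isLittleO h2
    simpa [sq] using this
  · have heq : (fun s : ℝ => (min s 0)^2) =ᶠ[nhds t] fun _ => (0:ℝ) := by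
      filter_upwards [Ioi_mem_nhds ht] with s hs
      rw [min_eq_right (le_of_lt (Set.mem_Ioi.mp hs))]
      norm_num
    have := (hasDerivAt_const t (0:ℝ)).congr_of_eventuallyEq heq
    rw [min_eq_right ht.le]
    simpa using this

private noncomputable def psi (c s : ℝ) : ℝ := ((min s 0)^2 - (min (s+c) 0)^2)/(2*c)
private noncomputable def psi' (c s : ℝ) : ℝ := (min s 0 - min (s+c) 0)/c

private lemma psi_deriv (c : ℝ) (hc : 0 < c) (s : ℝ) : HasDerivAt (psi c) (psi' c s) s := by
  have h1 := q_deriv' s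
  have h2 : HasDerivAt (fun u : ℝ => (min (u+c) 0)^2) (2 * min (s+c) 0) s := by
    have := (q_deriv' (s+c)).comp s ((hasDerivAt_id s).add_const c)
    simpa [Function.comp_def] using this
  have := (h1.sub h2).div_const (2*c)
  refine this.congr_deriv ?_
  unfold psi'
  field_simp

private lemma psi'_lip (c : ℝ) (hc : 0 < c) (s₁ s₂ : ℝ) :
    |psi' c s₁ - psi' c s₂| ≤ |s₁ - s₂| / c := by
  unfold psi'
  rw [div_sub_div_same, abs_div, abs_of_pos hc, div_le_div_iff_of_pos_right hc]
  rcases le_total s₁ 0 with a1 | a1 <;> rcases le_total s₂ 0 with a2 | a2 <;>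
    rcases le_total (s₁+c) 0 with b1 | b1 <;> rcases le_total (s₂+c) 0 with b2 | b2 <;>
    simp [min_eq_left, min_eq_right, a1, a2, b1, b2, abs_le] <;>
    constructor <;> cases abs_cases (s₁ - s₂) <;> linarith

private lemma psi_eq (c s : ℝ) (hc : 0 < c) :
    (if s > 0 then (0:ℝ) else if s < -c then -s - c/2 else s^2/(2*c)) = psi c s := by
  unfold psi
  split_ifs with h1 h2
  · rw [min_eq_right h1.le, min_eq_right (by linarith)]
    norm_num
  · rw [min_eq_left (not_lt.mp h1), min_eq_left (by linarith)]
    field_simp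
    ring
  · rw [min_eq_left (not_lt.mp h1), min_eq_right (by push_neg at h2; linarith)]
    norm_num

/-- the smoothed hinge loss has Lipschitz gradient with constant
‖h hᵀ‖₂/(σ‖h‖∞) (spectral norm of the outer product = operator norm of x ↦ ⟪h,x⟫h),
and the sum over N' samples has Lipschitz gradient with constant
(N'/σ)·max_k ‖h_k h_kᵀ‖₂/‖h_k‖∞. -/
theorem stmt3 {n N' : ℕ} (hn : 0 < n) (hN : 0 < N') (σ : ℝ) (hσ : 0 < σ)
    (h : Fin N' → EuclideanSpace ℝ (Fin n)) (hh : ∀ k, h k ≠ 0)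
    (y : Fin N' → ℝ) (hy : ∀ k, y k = 1 ∨ y k = -1) :
    let hinf : Fin N' → ℝ := fun k => ⨆ i, |h k i|
    let z : Fin N' → EuclideanSpace ℝ (Fin n) → ℝ := fun k θ => y k * (1 - ∑ i, θ i * h k i)
    let G : Fin N' → EuclideanSpace ℝ (Fin n) → ℝ := fun k θ =>
      if z k θ > 0 then 0
      else if z k θ < -(σ * hinf k) then -z k θ - σ / 2 * hinf k
      else (z k θ) ^ 2 / (2 * σ * hinf k)
    let spec : Fin N' → ℝ := fun k => ‖(innerSL ℝ (h k)).smulRight (h k)‖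
    (∀ k (θ₁ θ₂ : EuclideanSpace ℝ (Fin n)),
      ‖gradient (G k) θ₁ - gradient (G k) θ₂‖ ≤ spec k / (σ * hinf k) * ‖θ₁ - θ₂‖) ∧
    (∀ θ₁ θ₂ : EuclideanSpace ℝ (Fin n),
      ‖gradient (fun θ => ∑ k, G k θ) θ₁ - gradient (fun θ => ∑ k, G k θ) θ₂‖ ≤
        ((N' : ℝ) / σ) * (⨆ k, spec k / hinf k) * ‖θ₁ - θ₂‖) := by
  intro hinf z G spec
  haveI : Nonempty (Fin n) := ⟨⟨0, hn⟩⟩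
  haveI : Nonempty (Fin N') := ⟨⟨0, hN⟩⟩
  -- positivity of hinf
  have hinfpos : ∀ k, 0 < hinf k := by
    intro k
    obtain ⟨i, hi⟩ : ∃ i, h k i ≠ 0 := by
      by_contra hcon
      push_neg at hcon
      exact hh k (by ext i; simpa using hcon i)
    have hb : BddAbove (Set.range fun i => |h k i|) := (Set.finite_range _).bddAbove
    calc (0:ℝ) < |h k i| := abs_pos.mpr hi
      _ ≤ hinf k := le_ciSup hb i
  have hc : ∀ k, 0 < σ * hinf k := fun k => mul_pos hσ (hinfpos k)
  -- |y k| = 1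
  have hyabs : ∀ k, |y k| = 1 := by
    intro k; rcases hy k with hk | hk <;> rw [hk] <;> norm_num
  -- inner product form of z
  have hzinner : ∀ k θ, z k θ = y k * (1 - (inner ℝ (h k) θ : ℝ)) := by
    intro k θ
    simp only [z, PiLp.inner_apply, RCLike.inner_apply, starRingEnd_apply, star_trivial]
  -- G = psi ∘ z
  have hGeq : ∀ k, G k = fun θ => psi (σ * hinf k) (z k θ) := by
    intro k
    funext θ
    rw [← psi_eq _ _ (hc k)]
    simp only [G]
    split_ifs <;> ring
  -- gradient formula
  have key : ∀ k θ, HasGradientAt (G k)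
      ((psi' (σ * hinf k) (z k θ) * (-(y k))) • h k) θ := by
    intro k θ
    have hz : HasFDerivAt (z k) ((-(y k)) • innerSL ℝ (h k)) θ := by
      have : z k = fun θ => y k + ((-(y k)) • innerSL ℝ (h k)) θ := by
        funext θ; rw [hzinner]; simp; ring
      rw [this]
      exact ((((-(y k)) • innerSL ℝ (h k))).hasFDerivAt).const_add (y k)
    have hd := (psi_deriv _ (hc k) (z k θ)).comp_hasFDerivAt θ hz
    rw [hGeq k, hasGradientAt_iff_hasFDerivAt]
    have he : (InnerProductSpace.toDual ℝ (EuclideanSpace ℝ (Fin n)))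
        ((psi' (σ * hinf k) (z k θ) * (-(y k))) • h k)
        = psi' (σ * hinf k) (z k θ) • ((-(y k)) • innerSL ℝ (h k)) := by
      ext x
      simp [real_inner_smul_left]
      ring
    rw [he]
    exact hd
  -- per-sample Lipschitz bound
  have hspec : ∀ k, spec k = ‖h k‖ * ‖h k‖ := by
    intro k
    simp only [spec]
    rw [ContinuousLinearMap.norm_smulRight_apply, innerSL_apply_norm]
  have hbnd : ∀ k (θ₁ θ₂ : EuclideanSpace ℝ (Fin n)),
      ‖((psi' (σ * hinf k) (z k θ₁) * (-(y k))) • h k)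
        - ((psi' (σ * hinf k) (z k θ₂) * (-(y k))) • h k)‖
        ≤ spec k / (σ * hinf k) * ‖θ₁ - θ₂‖ := by
    intro k θ₁ θ₂
    set c := σ * hinf k with hcdef
    set p₁ := psi' c (z k θ₁)
    set p₂ := psi' c (z k θ₂)
    have hz12 : |z k θ₁ - z k θ₂| ≤ ‖h k‖ * ‖θ₁ - θ₂‖ := by
      rw [hzinner, hzinner]
      have : y k * (1 - (inner ℝ (h k) θ₁ : ℝ)) - y k * (1 - (inner ℝ (h k) θ₂ : ℝ))
          = y k * (inner ℝ (h k) (θ₂ - θ₁) : ℝ) := by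
        rw [inner_sub_right]; ring
      rw [this, abs_mul, hyabs k, one_mul]
      calc |(inner ℝ (h k) (θ₂ - θ₁) : ℝ)| ≤ ‖h k‖ * ‖θ₂ - θ₁‖ := abs_real_inner_le_norm _ _
        _ = ‖h k‖ * ‖θ₁ - θ₂‖ := by rw [norm_sub_rev]
    calc ‖(p₁ * (-(y k))) • h k - (p₂ * (-(y k))) • h k‖
        = |p₁ - p₂| * ‖h k‖ := by
          rw [← sub_smul, norm_smul, Real.norm_eq_abs]
          congr 1
          have : p₁ * (-(y k)) - p₂ * (-(y k)) = -((p₁ - p₂) * y k) := by ring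
          rw [this, abs_neg, abs_mul, hyabs k, mul_one]
      _ ≤ (|z k θ₁ - z k θ₂| / c) * ‖h k‖ :=
          mul_le_mul_of_nonneg_right (psi'_lip c (hc k) _ _) (norm_nonneg _)
      _ ≤ ((‖h k‖ * ‖θ₁ - θ₂‖) / c) * ‖h k‖ := by
          gcongr
          exact (hc k).le
      _ = spec k / c * ‖θ₁ - θ₂‖ := by
          rw [hspec k]
          field_simp
  constructor
  · intro k θ₁ θ₂
    rw [(key k θ₁).gradient, (key k θ₂).gradient]
    exact hbnd k θ₁ θ₂
  · intro θ₁ θ₂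
    have keysum : ∀ θ, HasGradientAt (fun θ => ∑ k, G k θ)
        (∑ k, (psi' (σ * hinf k) (z k θ) * (-(y k))) • h k) θ := by
      intro θ
      rw [hasGradientAt_iff_hasFDerivAt, map_sum]
      exact HasFDerivAt.fun_sum (fun k _ => (key k θ).hasFDerivAt)
    rw [(keysum θ₁).gradient, (keysum θ₂).gradient, ← Finset.sum_sub_distrib]
    have hsupb : BddAbove (Set.range fun k => spec k / hinf k) := (Set.finite_range _).bddAbove
    calc ‖∑ k, ((psi' (σ * hinf k) (z k θ₁) * (-(y k))) • h k
            - (psi' (σ * hinf k) (z k θ₂) * (-(y k))) • h k)‖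
        ≤ ∑ k, ‖(psi' (σ * hinf k) (z k θ₁) * (-(y k))) • h k
            - (psi' (σ * hinf k) (z k θ₂) * (-(y k))) • h k‖ := norm_sum_le _ _
      _ ≤ ∑ k, spec k / (σ * hinf k) * ‖θ₁ - θ₂‖ :=
          Finset.sum_le_sum fun k _ => hbnd k θ₁ θ₂
      _ ≤ ∑ _k : Fin N', (1/σ) * (⨆ j, spec j / hinf j) * ‖θ₁ - θ₂‖ := by
          apply Finset.sum_le_sum
          intro k _
          apply mul_le_mul_of_nonneg_right _ (norm_nonneg _)
          have h1 : spec k / (σ * hinf k) = (1/σ) * (spec k / hinf k) := by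
            field_simp
          rw [h1]
          exact mul_le_mul_of_nonneg_left (le_ciSup hsupb k) (by positivity)
      _ = ((N' : ℝ) / σ) * (⨆ k, spec k / hinf k) * ‖θ₁ - θ₂‖ := by
          rw [Finset.sum_const, Finset.card_univ, Fintype.card_fin, nsmul_eq_mul]
          ring
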